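/- Let O be any assignment and N a pure Nash equilibrium of the game induced by CCOORD with integer parameter p ≥ 1 such that Φ(N)^{1/(p+1)} ≤ γ·Φ(O)^{1/(p+1)} for some γ ≥ 0. Then the maximum completion time of any job in N is at most (γ(p+1)m^{1/(p+1)} + p)·max_j L(O_j). -/

import Mathlib

/-- Complete homogeneous sum: sum of all monomials of total degree `k` (with
repetition) in the elements of the list. -/
noncomputable def hcomp : List ℝ → ℕ → ℝ
  | _, 0 => 1
  | [], _ + 1 => 0
  | a :: l, k + 1 => a * hcomp (a :: l) k + hcomp l (k + 1)
  termination_by l k => (l.length, k)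

/-- `Ψ_k(A)`: `k!` times the sum of all monomials of total degree `k` in the
elements of `A`. -/
noncomputable def Psi (k : ℕ) (A : List ℝ) : ℝ := (k.factorial : ℝ) * hcomp A k

/-- The minimum load of job `i` over all machines. -/
noncomputable def wmin {n m : ℕ} (w : Fin n → Fin m → ℝ) (i : Fin n) : ℝ :=
  sInf (Set.range (w i))

/-- The inefficiency of job `i` on machine `j`. -/
noncomputable def rho {n m : ℕ} (w : Fin n → Fin m → ℝ) (i : Fin n) (j : Fin m) : ℝ :=
  w i j / wmin w i

/-- The load of machine `j` under assignment `N`. -/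
noncomputable def load {n m : ℕ} (w : Fin n → Fin m → ℝ) (N : Fin n → Fin m) (j : Fin m) : ℝ :=
  ∑ i ∈ Finset.univ.filter (fun i => N i = j), w i j

/-- The multiset (as a list) of loads of the jobs assigned to machine `j` under `N`. -/
noncomputable def mlist {n m : ℕ} (w : Fin n → Fin m → ℝ) (N : Fin n → Fin m)
    (j : Fin m) : List ℝ :=
  ((List.finRange n).filter (fun i => N i = j)).map (fun i => w i j)

/-- The completion time of job `i` under assignment `N` with the CCOORD mechanism. -/
noncomputable def Ccost {n m : ℕ} (p : ℕ) (w : Fin n → Fin m → ℝ)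
    (N : Fin n → Fin m) (i : Fin n) : ℝ :=
  (rho w i (N i) * Psi p (mlist w N (N i))) ^ ((1 : ℝ) / p)

/-- `N` is a pure Nash equilibrium of the game induced by CCOORD. -/
def isNashC {n m : ℕ} (p : ℕ) (w : Fin n → Fin m → ℝ) (N : Fin n → Fin m) : Prop :=
  ∀ (i : Fin n) (j : Fin m), Ccost p w N i ≤ Ccost p w (Function.update N i j) i

/-- The potential function `Φ`. -/
noncomputable def Phi {n m : ℕ} (p : ℕ) (w : Fin n → Fin m → ℝ)
    (N : Fin n → Fin m) : ℝ :=
  ∑ j, Psi (p + 1) (mlist w N j)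

@[simp] lemma hcomp_zero (l : List ℝ) : hcomp l 0 = 1 := by
  cases l <;> rw [hcomp]

@[simp] lemma hcomp_nil_succ (k : ℕ) : hcomp [] (k+1) = 0 := by rw [hcomp]

lemma hcomp_cons (a : ℝ) (l : List ℝ) (k : ℕ) :
    hcomp (a :: l) (k+1) = a * hcomp (a :: l) k + hcomp l (k+1) := by
  rw [hcomp]

lemma hcomp_nonneg : ∀ (l : List ℝ), (∀ x ∈ l, 0 ≤ x) → ∀ k, 0 ≤ hcomp l k := by
  intro l
  induction l with
  | nil => intro _ k; cases k <;> simp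
  | cons a l ih =>
    intro hl k
    have ha : 0 ≤ a := hl a (by simp)
    have hl' : ∀ x ∈ l, 0 ≤ x := fun x hx => hl x (by simp [hx])
    induction k with
    | zero => simp
    | succ k ihk =>
      rw [hcomp_cons]
      have := ih hl' (k+1)
      positivity

lemma hcomp_cons_pos (a : ℝ) (ha : 0 < a) (l : List ℝ) (hl : ∀ x ∈ l, 0 ≤ x) (k : ℕ) :
    0 < hcomp (a :: l) k := by
  induction k with
  | zero => simp
  | succ k ihk =>
    rw [hcomp_cons]
    have h2 := hcomp_nonneg l hl (k+1)
    positivity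

lemma hcomp_pos (l : List ℝ) (hne : l ≠ []) (hl : ∀ x ∈ l, 0 < x) (k : ℕ) :
    0 < hcomp l k := by
  cases l with
  | nil => exact absurd rfl hne
  | cons a l =>
    exact hcomp_cons_pos a (hl a (by simp)) l (fun x hx => (hl x (by simp [hx])).le) k

@[simp] lemma hcomp_singleton (a : ℝ) (k : ℕ) : hcomp [a] k = a ^ k := by
  induction k with
  | zero => simp
  | succ k ih => rw [hcomp_cons, ih]; simp [pow_succ]; ring

lemma hcomp_cons_expand (x : ℝ) (L : List ℝ) (k : ℕ) :
    hcomp (x :: L) k = ∑ t ∈ Finset.range (k+1), x^t * hcomp L (k - t) := by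
  induction k with
  | zero => simp
  | succ k ih =>
    rw [hcomp_cons, ih, Finset.sum_range_succ' _ (k+1)]
    simp only [pow_zero, one_mul, Nat.sub_zero, Finset.mul_sum]
    congr 1
    apply Finset.sum_congr rfl
    intro t ht
    have h : k + 1 - (t+1) = k - t := by omega
    rw [h]; ring

lemma hcomp_insert : ∀ (L1 : List ℝ) (x : ℝ) (L2 : List ℝ) (k : ℕ),
    hcomp (L1 ++ x :: L2) k = ∑ t ∈ Finset.range (k+1), x^t * hcomp (L1 ++ L2) (k - t) := by
  intro L1
  induction L1 with
  | nil => intro x L2 k; simpa using hcomp_cons_expand x L2 k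
  | cons y L1 ih =>
    intro x L2 k
    induction k with
    | zero => simp
    | succ k ihk =>
      rw [List.cons_append, hcomp_cons, ← List.cons_append, ihk, ih x L2 (k+1)]
      rw [Finset.sum_range_succ _ (k+1), Finset.sum_range_succ _ (k+1)]
      simp only [Nat.sub_self, hcomp_zero, mul_one, Finset.mul_sum]
      have step : ∀ t ∈ Finset.range (k+1),
          x^t * hcomp ((y :: L1) ++ L2) (k+1-t)
          = y * (x^t * hcomp ((y::L1) ++ L2) (k-t)) + x^t * hcomp (L1 ++ L2) (k+1-t) := by
        intro t ht
        simp only [Finset.mem_range] at ht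
        have h1 : k + 1 - t = (k - t) + 1 := by omega
        rw [h1, List.cons_append, hcomp_cons, ← List.cons_append]
        ring
      rw [Finset.sum_congr rfl step, Finset.sum_add_distrib]
      ring

lemma hcomp_sum_le : ∀ (l : List ℝ), (∀ x ∈ l, 0 ≤ x) → ∀ k, hcomp l k ≤ l.sum ^ k := by
  intro l
  induction l with
  | nil => intro _ k; cases k <;> simp
  | cons a l ih =>
    intro hl k
    have ha : 0 ≤ a := hl a (by simp)
    have hl' : ∀ x ∈ l, 0 ≤ x := fun x hx => hl x (by simp [hx])
    have hs : 0 ≤ l.sum := List.sum_nonneg hl'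
    induction k with
    | zero => simp
    | succ k ihk =>
      rw [hcomp_cons, List.sum_cons]
      have h1 : a * hcomp (a :: l) k ≤ a * (a + l.sum) ^ k := by
        apply mul_le_mul_of_nonneg_left _ ha
        calc hcomp (a :: l) k ≤ (a :: l).sum ^ k := ihk
        _ = (a + l.sum) ^ k := by rw [List.sum_cons]
      have h2 : hcomp l (k+1) ≤ l.sum ^ (k+1) := ih hl' (k+1)
      have h3 : l.sum ^ (k+1) ≤ l.sum * (a + l.sum) ^ k := by
        rw [pow_succ']
        exact mul_le_mul_of_nonneg_left (pow_le_pow_left₀ hs (by linarith) k) hs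
      calc a * hcomp (a :: l) k + hcomp l (k+1)
          ≤ a * (a + l.sum) ^ k + l.sum * (a + l.sum) ^ k := by linarith
        _ = (a + l.sum) ^ (k+1) := by ring

lemma F_aux (a : ℝ) (ha : 0 ≤ a) (l : List ℝ) (hl : ∀ x ∈ l, 0 < x)
    (hLC : ∀ k, hcomp l k * hcomp l (k+2) ≤ hcomp l (k+1)^2) :
    ∀ k, hcomp (a::l) k * hcomp l (k+2) ≤ hcomp (a::l) (k+1) * hcomp l (k+1) := by
  have hl' : ∀ x ∈ l, 0 ≤ x := fun x hx => (hl x hx).le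
  rcases eq_or_ne l [] with rfl | hne
  · intro k
    have h1 : 0 ≤ hcomp (a::([]:List ℝ)) (k+1) := hcomp_nonneg _ (by intro x hx; simp at hx; simp [hx, ha]) _
    simp
  · intro k
    induction k with
    | zero =>
      have h0 := hLC 0
      have h1 : 0 ≤ hcomp l 1 := hcomp_nonneg l hl' 1
      rw [hcomp_cons]
      simp only [hcomp_zero, one_mul, mul_one] at *
      nlinarith
    | succ k ihk =>
      set γ0 := hcomp (a::l) k with hγ0
      set γ1 := hcomp (a::l) (k+1) with hγ1
      set β1 := hcomp l (k+1) with hβ1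
      set β2 := hcomp l (k+2) with hβ2
      set β3 := hcomp l (k+3) with hβ3
      have r1 : hcomp (a::l) (k+2) = a * γ1 + β2 := hcomp_cons a l (k+1)
      have hLC1 : β1 * β3 ≤ β2^2 := hLC (k+1)
      have hβ1pos : 0 < β1 := hcomp_pos l hne hl (k+1)
      have hβ2pos : 0 ≤ β2 := hcomp_nonneg l hl' (k+2)
      have hγ0pos : 0 ≤ γ0 := hcomp_nonneg _ (by
        intro x hx; rcases List.mem_cons.mp hx with rfl | hx; exact ha; exact (hl x hx).le) _
      have hγ1pos : 0 ≤ γ1 := hcomp_nonneg _ (by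
        intro x hx; rcases List.mem_cons.mp hx with rfl | hx; exact ha; exact (hl x hx).le) _
      -- G := γ1 * β2 - γ0 * β3 ≥ 0
      have hG : 0 ≤ γ1 * β2 - γ0 * β3 := by
        have key : β1 * (γ1 * β2 - γ0 * β3) ≥ β2 * (γ1 * β1 - γ0 * β2) + γ0 * (β2^2 - β1*β3) - β2 * (γ1*β1 - γ0*β2) := by nlinarith [mul_nonneg hγ0pos (sub_nonneg.mpr hLC1)]
        nlinarith [mul_nonneg hβ2pos (sub_nonneg.mpr ihk), mul_nonneg hγ0pos (sub_nonneg.mpr hLC1)]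
      have r2 : γ1 = a * γ0 + β1 := hcomp_cons a l k
      rw [r1]
      nlinarith [mul_nonneg ha hG]

lemma hcomp_logConcave : ∀ (l : List ℝ), (∀ x ∈ l, 0 < x) →
    ∀ k, hcomp l k * hcomp l (k+2) ≤ hcomp l (k+1)^2 := by
  intro l
  induction l with
  | nil =>
    intro _ k
    have h1 : hcomp ([] : List ℝ) (k+1) = 0 := hcomp_nil_succ k
    have h2 : hcomp ([] : List ℝ) (k+2) = 0 := hcomp_nil_succ (k+1)
    rw [h1, h2]; simp
  | cons a l ih =>
    intro hl k
    have ha : 0 < a := hl a (by simp)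
    have hl' : ∀ x ∈ l, 0 < x := fun x hx => hl x (by simp [hx])
    have hF := F_aux a ha.le l hl' (ih hl') k
    have r1 : hcomp (a::l) (k+1) = a * hcomp (a::l) k + hcomp l (k+1) := hcomp_cons a l k
    have r2 : hcomp (a::l) (k+2) = a * hcomp (a::l) (k+1) + hcomp l (k+2) := hcomp_cons a l (k+1)
    have e : hcomp (a::l) (k+1) * hcomp (a::l) (k+1)
        = (a * hcomp (a::l) k + hcomp l (k+1)) * hcomp (a::l) (k+1) := by rw [← r1]
    rw [r2]
    nlinarith [hF, e]

lemma hcomp_logConvex : ∀ (l : List ℝ), (∀ x ∈ l, 0 < x) →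
    ∀ k : ℕ, ((k:ℝ)+1) * hcomp l (k+1)^2 ≤ ((k:ℝ)+2) * (hcomp l k * hcomp l (k+2)) := by
  intro l
  induction l with
  | nil =>
    intro _ k
    have h1 : hcomp ([] : List ℝ) (k+1) = 0 := hcomp_nil_succ k
    have h2 : hcomp ([] : List ℝ) (k+2) = 0 := hcomp_nil_succ (k+1)
    rw [h1, h2]; simp
  | cons a l ih =>
    intro hl
    have ha : 0 < a := hl a (by simp)
    have hl' : ∀ x ∈ l, 0 < x := fun x hx => hl x (by simp [hx])
    have hnn : ∀ x ∈ a :: l, 0 ≤ x := fun x hx => (hl x hx).le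
    rcases eq_or_ne l [] with rfl | hne
    · intro k
      simp only [hcomp_singleton]
      have h1 : a^(k+1) * a^(k+1) = a^k * a^(k+2) := by ring
      have h2 : 0 ≤ a^k * a^(k+2) := by positivity
      nlinarith [h2]
    · have ihl := ih hl'
      have hF := F_aux a ha.le l hl' (hcomp_logConcave l hl')
      intro k
      induction k with
      | zero =>
        have r1 : hcomp (a::l) 1 = a * hcomp (a::l) 0 + hcomp l 1 := hcomp_cons a l 0
        have r2 : hcomp (a::l) 2 = a * hcomp (a::l) 1 + hcomp l 2 := hcomp_cons a l 1
        have h0 := ihl 0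
        have hb1 : 0 < hcomp l 1 := hcomp_pos l hne hl' 1
        have hb2 : 0 ≤ hcomp l 2 := hcomp_nonneg l (fun x hx => (hl' x hx).le) 2
        rw [r2, r1]
        simp only [hcomp_zero, mul_one, Nat.cast_zero] at *
        nlinarith [h0, ha.le, hb1.le, hb2]
      | succ k ihk =>
        have r1 : hcomp (a::l) (k+1) = a * hcomp (a::l) k + hcomp l (k+1) := hcomp_cons a l k
        have r2 : hcomp (a::l) (k+2) = a * hcomp (a::l) (k+1) + hcomp l (k+2) := hcomp_cons a l (k+1)
        have r3 : hcomp (a::l) (k+3) = a * hcomp (a::l) (k+2) + hcomp l (k+3) := hcomp_cons a l (k+2)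
        set g0 := hcomp (a::l) k with hg0def
        set b1 := hcomp l (k+1) with hb1def
        set b2 := hcomp l (k+2) with hb2def
        set b3 := hcomp l (k+3) with hb3def
        have hg0 : 0 ≤ g0 := hcomp_nonneg _ hnn k
        have hb1 : 0 < b1 := hcomp_pos l hne hl' (k+1)
        have hb2 : 0 ≤ b2 := hcomp_nonneg l (fun x hx => (hl' x hx).le) (k+2)
        have hb3 : 0 ≤ b3 := hcomp_nonneg l (fun x hx => (hl' x hx).le) (k+3)
        have hX : 0 ≤ ((k:ℝ)+3)*(b1*b3) - ((k:ℝ)+2)*b2^2 := by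
          have := ihl (k+1)
          push_cast at this
          linarith
        have hFk := hF k
        rw [r1] at hFk
        -- hFk : g0 * b2 ≤ (a * g0 + b1) * b1
        have ihk' := ihk
        rw [r2, r1] at ihk'
        have hP3 : 0 ≤ a*g0*(a*g0+b1) + ((k:ℝ)+2)*(g0*b2) - ((k:ℝ)+1)*((a*g0+b1)*b1) := by
          nlinarith [ihk']
        have t1 : 0 ≤ (((k:ℝ)+2)*b1) * (((k:ℝ)+3)*(b1*b3) - ((k:ℝ)+2)*b2^2) :=
          mul_nonneg (by positivity) hX
        have t2 : 0 ≤ (a*((k:ℝ)+2)*g0) * (((k:ℝ)+3)*(b1*b3) - ((k:ℝ)+2)*b2^2) :=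
          mul_nonneg (by positivity) hX
        have t3 : 0 ≤ (a*((k:ℝ)+2)*b2) * (a*g0*(a*g0+b1) + ((k:ℝ)+2)*(g0*b2) - ((k:ℝ)+1)*((a*g0+b1)*b1)) :=
          mul_nonneg (by positivity) hP3
        have t4 : 0 ≤ (a^2*((k:ℝ)+2)*(a*g0+b1)) * ((a*g0+b1)*b1 - g0*b2) := by
          apply mul_nonneg (by positivity)
          linarith [hFk]
        have hkb : 0 < ((k:ℝ)+2) * b1 := by positivity
        rw [r3, r2, r1]
        push_cast
        nlinarith [t1, t2, t3, t4, hkb]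

lemma Psi_nonneg (k : ℕ) (l : List ℝ) (hl : ∀ x ∈ l, 0 ≤ x) : 0 ≤ Psi k l :=
  mul_nonneg (by positivity) (hcomp_nonneg l hl k)

lemma Psi_pos (k : ℕ) (l : List ℝ) (hne : l ≠ []) (hl : ∀ x ∈ l, 0 < x) : 0 < Psi k l :=
  mul_pos (by positivity) (hcomp_pos l hne hl k)

lemma psi_logConvex (l : List ℝ) (hl : ∀ x ∈ l, 0 < x) (k : ℕ) :
    Psi (k+1) l ^ 2 ≤ Psi k l * Psi (k+2) l := by
  have h := hcomp_logConvex l hl k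
  have hfp : (0:ℝ) < k.factorial := by positivity
  have key := mul_le_mul_of_nonneg_left h (by positivity : (0:ℝ) ≤ ((k:ℝ)+1) * (k.factorial:ℝ)^2)
  simp only [Psi, Nat.factorial_succ]
  push_cast
  nlinarith [key]

lemma psi_adj_pow (l : List ℝ) (hne : l ≠ []) (hl : ∀ x ∈ l, 0 < x) (k : ℕ) :
    Psi k l ^ (k+1) ≤ Psi (k+1) l ^ k := by
  induction k with
  | zero => simp [Psi]
  | succ k ih =>
    have hconv := psi_logConvex l hl k
    have hpos : ∀ j, 0 < Psi j l := fun j => Psi_pos j l hne hl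
    have h1 : (Psi (k+1) l ^ 2) ^ (k+1) ≤ (Psi k l * Psi (k+2) l) ^ (k+1) :=
      pow_le_pow_left₀ (sq_nonneg _) hconv (k+1)
    rw [mul_pow] at h1
    have h2 : Psi k l ^ (k+1) * Psi (k+2) l ^ (k+1) ≤ Psi (k+1) l ^ k * Psi (k+2) l ^ (k+1) :=
      mul_le_mul_of_nonneg_right ih (pow_nonneg (hpos _).le _)
    have h3 : (Psi (k+1) l ^ 2) ^ (k+1) = Psi (k+1) l ^ k * Psi (k+1) l ^ (k+2) := by
      rw [← pow_mul, ← pow_add]; ring_nf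
    have h4 : Psi (k+1) l ^ k * Psi (k+1) l ^ (k+2) ≤ Psi (k+1) l ^ k * Psi (k+2) l ^ (k+1) := by
      calc Psi (k+1) l ^ k * Psi (k+1) l ^ (k+2) = (Psi (k+1) l ^ 2) ^ (k+1) := h3.symm
      _ ≤ Psi k l ^ (k+1) * Psi (k+2) l ^ (k+1) := h1
      _ ≤ _ := h2
    exact le_of_mul_le_mul_left h4 (pow_pos (hpos _) k)

lemma psi_pow_le (l : List ℝ) (hne : l ≠ []) (hl : ∀ x ∈ l, 0 < x) (j K : ℕ) (hj : j ≤ K) :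
    Psi j l ^ K ≤ Psi K l ^ j := by
  induction K, hj using Nat.le_induction with
  | base => exact le_refl _
  | succ K hK ih =>
    rcases Nat.eq_zero_or_pos K with rfl | hKpos
    · have : j = 0 := Nat.le_zero.mp hK
      subst this
      simp [Psi]
    · have hpos : ∀ i : ℕ, 0 < Psi i l := fun i => Psi_pos i l hne hl
      have adj := psi_adj_pow l hne hl K
      have c2 : (Psi j l ^ K)^(K+1) ≤ (Psi K l ^ j)^(K+1) :=
        pow_le_pow_left₀ (pow_nonneg (hpos _).le _) ih _
      have c4 : (Psi K l ^ (K+1))^j ≤ (Psi (K+1) l ^ K)^j :=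
        pow_le_pow_left₀ (pow_nonneg (hpos _).le _) adj _
      have key : (Psi j l ^ (K+1))^K ≤ (Psi (K+1) l ^ j)^K := by
        calc (Psi j l ^ (K+1))^K = (Psi j l ^ K)^(K+1) := by rw [← pow_mul, ← pow_mul]; ring_nf
        _ ≤ (Psi K l ^ j)^(K+1) := c2
        _ = (Psi K l ^ (K+1))^j := by rw [← pow_mul, ← pow_mul]; ring_nf
        _ ≤ (Psi (K+1) l ^ K)^j := c4
        _ = (Psi (K+1) l ^ j)^K := by rw [← pow_mul, ← pow_mul]; ring_nf
      exact le_of_pow_le_pow_left₀ hKpos.ne' (pow_nonneg (hpos _).le _) key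

lemma psi_le_rpow (l : List ℝ) (hl : ∀ x ∈ l, 0 < x) (j K : ℕ) (hj : j ≤ K) (hK : 1 ≤ K) :
    Psi j l ≤ (Psi K l ^ ((1:ℝ)/K)) ^ j := by
  rcases eq_or_ne l [] with rfl | hne
  · have hPK : Psi K ([] : List ℝ) = 0 := by
      obtain ⟨K', rfl⟩ := Nat.exists_eq_add_of_le hK
      simp [Psi, Nat.add_comm 1 K', hcomp_nil_succ]
    rw [hPK, Real.zero_rpow (by positivity : (1:ℝ)/K ≠ 0)]
    rcases Nat.eq_zero_or_pos j with rfl | hj0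
    · simp [Psi]
    · obtain ⟨j', rfl⟩ := Nat.exists_eq_add_of_le hj0
      simp [Psi, Nat.add_comm 1 j', hcomp_nil_succ, zero_pow (by omega : j' + 1 ≠ 0)]
  · have hpos : ∀ i : ℕ, 0 < Psi i l := fun i => Psi_pos i l hne hl
    have h := psi_pow_le l hne hl j K hj
    have hKne : (K:ℝ) ≠ 0 := by positivity
    have h2 : ((Psi j l ^ K : ℝ)) ^ ((1:ℝ)/K) ≤ ((Psi K l ^ j : ℝ)) ^ ((1:ℝ)/K) :=
      Real.rpow_le_rpow (pow_nonneg (hpos _).le _) h (by positivity)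
    calc Psi j l = ((Psi j l ^ K : ℝ)) ^ ((1:ℝ)/K) := by
          rw [← Real.rpow_natCast (Psi j l) K, ← Real.rpow_mul (hpos j).le,
            mul_one_div_cancel hKne, Real.rpow_one]
      _ ≤ ((Psi K l ^ j : ℝ)) ^ ((1:ℝ)/K) := h2
      _ = (Psi K l ^ ((1:ℝ)/K)) ^ j := by
          rw [← Real.rpow_natCast (Psi K l) j, ← Real.rpow_mul (hpos K).le,
            ← Real.rpow_natCast (Psi K l ^ ((1:ℝ)/K)) j, ← Real.rpow_mul (hpos K).le]
          ring_nf

lemma psi_insert_le (p : ℕ) (x : ℝ) (hx : 0 ≤ x) (L1 L2 : List ℝ)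
    (hL : ∀ y ∈ L1 ++ L2, 0 < y) :
    Psi p (L1 ++ x :: L2) ≤ (Psi (p+1) (L1++L2) ^ ((1:ℝ)/(p+1)) + p * x) ^ p := by
  set S := Psi (p+1) (L1++L2) ^ ((1:ℝ)/(p+1)) with hSdef
  have hL' : ∀ y ∈ L1 ++ L2, (0:ℝ) ≤ y := fun y hy => (hL y hy).le
  have hS : 0 ≤ S := Real.rpow_nonneg (Psi_nonneg _ _ hL') _
  have expand : Psi p (L1 ++ x :: L2)
      = ∑ t ∈ Finset.range (p+1), (p.factorial : ℝ) * (x^t * hcomp (L1 ++ L2) (p - t)) := by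
    rw [Psi, hcomp_insert, Finset.mul_sum]
  rw [expand]
  have term_le : ∀ t ∈ Finset.range (p+1),
      (p.factorial : ℝ) * (x^t * hcomp (L1 ++ L2) (p - t))
        ≤ (p*x)^t * S^(p-t) * (p.choose t : ℝ) := by
    intro t ht
    simp only [Finset.mem_range] at ht
    have htp : t ≤ p := by omega
    have h1 : ((p-t).factorial : ℝ) * hcomp (L1 ++ L2) (p - t) ≤ S ^ (p - t) := by
      have := psi_le_rpow (L1 ++ L2) hL (p - t) (p+1) (by omega) (by omega)
      rw [Psi] at this
      push_cast at this
      exact this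
    have hnat : (p.factorial : ℕ) ≤ p.choose t * p^t * (p-t).factorial := by
      have e := Nat.choose_mul_factorial_mul_factorial htp
      have ht2 : t.factorial ≤ p^t :=
        le_trans (Nat.factorial_le_pow t) (Nat.pow_le_pow_left htp t)
      calc p.factorial = p.choose t * t.factorial * (p-t).factorial := e.symm
        _ ≤ p.choose t * p^t * (p-t).factorial := by
            exact Nat.mul_le_mul_right _ (Nat.mul_le_mul_left _ ht2)
    have hnat' : (p.factorial : ℝ) ≤ (p.choose t : ℝ) * (p:ℝ)^t * ((p-t).factorial : ℝ) := by
      exact_mod_cast hnat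
    have hh : 0 ≤ hcomp (L1 ++ L2) (p - t) := hcomp_nonneg _ hL' _
    calc (p.factorial : ℝ) * (x^t * hcomp (L1 ++ L2) (p - t))
        ≤ ((p.choose t : ℝ) * (p:ℝ)^t * ((p-t).factorial : ℝ)) * (x^t * hcomp (L1 ++ L2) (p - t)) := by
          apply mul_le_mul_of_nonneg_right hnat' (by positivity)
      _ = ((p.choose t : ℝ) * (p:ℝ)^t * x^t) * (((p-t).factorial : ℝ) * hcomp (L1 ++ L2) (p - t)) := by ring
      _ ≤ ((p.choose t : ℝ) * (p:ℝ)^t * x^t) * S^(p-t) := by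
          apply mul_le_mul_of_nonneg_left h1 (by positivity)
      _ = (p*x)^t * S^(p-t) * (p.choose t : ℝ) := by rw [mul_pow]; ring
  calc ∑ t ∈ Finset.range (p+1), (p.factorial : ℝ) * (x^t * hcomp (L1 ++ L2) (p - t))
      ≤ ∑ t ∈ Finset.range (p+1), (p*x)^t * S^(p-t) * (p.choose t : ℝ) :=
        Finset.sum_le_sum term_le
    _ = ((p:ℝ)*x + S)^p := (add_pow _ _ _).symm
    _ = (S + p*x)^p := by rw [add_comm]

lemma psi_mono_insert (K : ℕ) (x : ℝ) (hx : 0 ≤ x) (L1 L2 : List ℝ)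
    (hL : ∀ y ∈ L1 ++ L2, (0:ℝ) ≤ y) :
    Psi K (L1 ++ L2) ≤ Psi K (L1 ++ x :: L2) := by
  rw [Psi, Psi, hcomp_insert]
  apply mul_le_mul_of_nonneg_left _ (by positivity)
  have h0 : x^0 * hcomp (L1++L2) (K - 0) = hcomp (L1++L2) K := by simp
  calc hcomp (L1++L2) K = x^0 * hcomp (L1++L2) (K - 0) := h0.symm
    _ ≤ ∑ t ∈ Finset.range (K+1), x^t * hcomp (L1 ++ L2) (K - t) := by
        apply Finset.single_le_sum (f := fun t => x^t * hcomp (L1 ++ L2) (K - t))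
        · intro t ht
          exact mul_nonneg (by positivity) (hcomp_nonneg _ hL _)
        · simp

lemma mlist_split {n m : ℕ} (w : Fin n → Fin m → ℝ) (N : Fin n → Fin m) (i : Fin n) (j : Fin m) :
    ∃ L1 L2 : List ℝ,
      mlist w (Function.update N i j) j = L1 ++ w i j :: L2 ∧
      mlist w N j = (if N i = j then L1 ++ w i j :: L2 else L1 ++ L2) ∧
      (∀ y ∈ L1 ++ L2, ∃ i', y = w i' j) := by
  obtain ⟨A, B, hAB⟩ := List.append_of_mem (List.mem_finRange i)
  have hnd : (A ++ i :: B).Nodup := hAB ▸ List.nodup_finRange n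
  have hiA : i ∉ A := fun h => (List.nodup_append'.mp hnd).2.2 h List.mem_cons_self
  have hiB : i ∉ B := (List.nodup_cons.mp (List.nodup_append.mp hnd).2.1).1
  refine ⟨(A.filter (fun i' => N i' = j)).map (fun i' => w i' j),
          (B.filter (fun i' => N i' = j)).map (fun i' => w i' j), ?_, ?_, ?_⟩
  · rw [mlist, hAB, List.filter_append, List.filter_cons]
    have hA : A.filter (fun i' => Function.update N i j i' = j) = A.filter (fun i' => N i' = j) := by
      apply List.filter_congr
      intro x hx
      have hxi : x ≠ i := fun h => hiA (h ▸ hx)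
      simp [Function.update_of_ne hxi]
    have hB : B.filter (fun i' => Function.update N i j i' = j) = B.filter (fun i' => N i' = j) := by
      apply List.filter_congr
      intro x hx
      have hxi : x ≠ i := fun h => hiB (h ▸ hx)
      simp [Function.update_of_ne hxi]
    simp [hA, hB, Function.update_self]
  · rw [mlist, hAB, List.filter_append, List.filter_cons]
    by_cases h : N i = j
    · simp [h]
    · simp [h]
  · intro y hy
    rcases List.mem_append.mp hy with hy | hy <;>
    · rcases List.mem_map.mp hy with ⟨i', _, rfl⟩
      exact ⟨i', rfl⟩

lemma mlist_sum {n m : ℕ} (w : Fin n → Fin m → ℝ) (N : Fin n → Fin m) (j : Fin m) :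
    (mlist w N j).sum = load w N j := by
  rw [mlist, load]
  have h1 : (Finset.univ : Finset (Fin n)) = ⟨(List.finRange n : Multiset (Fin n)), List.nodup_finRange n⟩ := by
    ext x; simp [List.mem_finRange]; exact List.mem_finRange x
  rw [Finset.sum, h1, Finset.filter]
  simp [Multiset.filter_coe, Multiset.map_coe, Multiset.sum_coe]

lemma wmin_attained {n m : ℕ} (hm : 0 < m) (w : Fin n → Fin m → ℝ) (i : Fin n) :
    ∃ js : Fin m, wmin w i = w i js ∧ ∀ j, w i js ≤ w i j := by
  obtain ⟨js, _, hmin⟩ := Finset.exists_min_image Finset.univ (w i)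
    ⟨⟨0, hm⟩, Finset.mem_univ _⟩
  refine ⟨js, le_antisymm ?_ ?_, fun j => hmin j (Finset.mem_univ j)⟩
  · exact csInf_le (Set.Finite.bddBelow (Set.finite_range _)) ⟨js, rfl⟩
  · exact le_csInf ⟨w i js, ⟨js, rfl⟩⟩ (by rintro b ⟨j, rfl⟩; exact hmin j (Finset.mem_univ j))

lemma mlist_mem_pos {n m : ℕ} {w : Fin n → Fin m → ℝ} (hw : ∀ i j, 0 < w i j)
    {N : Fin n → Fin m} {j : Fin m} : ∀ y ∈ mlist w N j, 0 < y := by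
  intro y hy
  rcases List.mem_map.mp hy with ⟨i', _, rfl⟩
  exact hw i' j

theorem stmt_16 (n m : ℕ) (p : ℕ) (hp : 1 ≤ p) (hm : 0 < m)
    (w : Fin n → Fin m → ℝ) (hw : ∀ i j, 0 < w i j)
    (N O : Fin n → Fin m) (hN : isNashC p w N)
    (γ : ℝ) (hγ : 0 ≤ γ)
    (hΦ : Phi p w N ^ ((1 : ℝ) / (p + 1)) ≤ γ * Phi p w O ^ ((1 : ℝ) / (p + 1))) :
    ∀ i : Fin n, Ccost p w N i ≤
      (γ * (p + 1) * (m : ℝ) ^ ((1 : ℝ) / (p + 1)) + p) *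
        Finset.univ.sup' ⟨⟨0, hm⟩, Finset.mem_univ _⟩ (load w O) := by
  intro i
  set maxL := Finset.univ.sup' ⟨⟨0, hm⟩, Finset.mem_univ _⟩ (load w O) with hmaxLdef
  have hload_nonneg : ∀ j, 0 ≤ load w O j :=
    fun j => Finset.sum_nonneg (fun i' _ => (hw i' j).le)
  have hload_le : ∀ j, load w O j ≤ maxL :=
    fun j => Finset.le_sup' (load w O) (Finset.mem_univ j)
  have hmaxL0 : 0 ≤ maxL := le_trans (hload_nonneg ⟨0, hm⟩) (hload_le ⟨0, hm⟩)
  obtain ⟨js, hws, hmin⟩ := wmin_attained hm w i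
  obtain ⟨L1, L2, hN', hNsplit, hmem⟩ := mlist_split w N i js
  set x := w i js with hxdef
  have hx0 : 0 < x := hw i js
  have hpos12 : ∀ y ∈ L1 ++ L2, 0 < y := fun y hy => by
    obtain ⟨i', rfl⟩ := hmem y hy; exact hw i' js
  have hnn12 : ∀ y ∈ L1 ++ L2, (0:ℝ) ≤ y := fun y hy => (hpos12 y hy).le
  have hnnx : ∀ y ∈ L1 ++ x :: L2, (0:ℝ) ≤ y := by
    intro y hy
    rcases List.mem_append.mp hy with hy | hy
    · exact hnn12 y (List.mem_append.mpr (Or.inl hy))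
    · rcases List.mem_cons.mp hy with rfl | hy
      · exact hx0.le
      · exact hnn12 y (List.mem_append.mpr (Or.inr hy))
  set S := Psi (p+1) (L1 ++ L2) ^ ((1:ℝ)/(p+1)) with hSdef
  have hS0 : 0 ≤ S := Real.rpow_nonneg (Psi_nonneg _ _ hnn12) _
  have hpne : (p:ℝ) ≠ 0 := by positivity
  have hrho : rho w i js = 1 := by
    rw [rho, hws]; exact div_self (hw i js).ne'
  -- Step 1 : Ccost ≤ S + p x
  have step1 : Ccost p w N i ≤ S + p * x := by
    have h1 := hN i js
    have hcc : Ccost p w (Function.update N i js) i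
        = (Psi p (L1 ++ x :: L2)) ^ ((1:ℝ)/p) := by
      simp only [Ccost, Function.update_self, hrho, one_mul, hN']
    rw [hcc] at h1
    refine le_trans h1 ?_
    have h2 := psi_insert_le p x hx0.le L1 L2 hpos12
    have h3 : (Psi p (L1 ++ x :: L2) : ℝ) ^ ((1:ℝ)/p) ≤ ((S + p*x)^p) ^ ((1:ℝ)/p) :=
      Real.rpow_le_rpow (Psi_nonneg _ _ hnnx) h2 (by positivity)
    refine le_trans h3 ?_
    have hSx : (0:ℝ) ≤ S + p*x := by positivity
    rw [← Real.rpow_natCast (S + p*x) p, ← Real.rpow_mul hSx, mul_one_div,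
      div_self hpne, Real.rpow_one]
  -- Step 2 : S ≤ Phi(N)^{1/(p+1)}
  have hRmono : Psi (p+1) (L1 ++ L2) ≤ Phi p w N := by
    have ha : Psi (p+1) (L1 ++ L2) ≤ Psi (p+1) (mlist w N js) := by
      rw [hNsplit]
      by_cases h : N i = js
      · simp only [h, if_true]
        exact psi_mono_insert (p+1) x hx0.le L1 L2 hnn12
      · simp only [h, if_false]
        exact le_refl _
    refine le_trans ha ?_
    rw [Phi]
    exact Finset.single_le_sum (f := fun j => Psi (p+1) (mlist w N j))
      (fun j _ => Psi_nonneg _ _ (fun y hy => (mlist_mem_pos hw y hy).le))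
      (Finset.mem_univ js)
  have hPhiN0 : 0 ≤ Phi p w N :=
    Finset.sum_nonneg fun j _ => Psi_nonneg _ _ (fun y hy => (mlist_mem_pos hw y hy).le)
  have step2 : S ≤ Phi p w N ^ ((1:ℝ)/(p+1)) :=
    Real.rpow_le_rpow (Psi_nonneg _ _ hnn12) hRmono (by positivity)
  -- Step 3 : Phi(O)^{1/(p+1)} ≤ (p+1) m^{1/(p+1)} maxL
  have hfactpos : (0:ℝ) < ((p+1).factorial : ℝ) := by positivity
  have hb : ∀ j, Psi (p+1) (mlist w O j) ≤ ((p+1).factorial : ℝ) * maxL^(p+1) := by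
    intro j
    rw [Psi]
    apply mul_le_mul_of_nonneg_left _ hfactpos.le
    calc hcomp (mlist w O j) (p+1) ≤ (mlist w O j).sum ^ (p+1) :=
          hcomp_sum_le _ (fun y hy => (mlist_mem_pos hw y hy).le) _
      _ = load w O j ^ (p+1) := by rw [mlist_sum]
      _ ≤ maxL ^ (p+1) := pow_le_pow_left₀ (hload_nonneg j) (hload_le j) _
  have hPhiO : Phi p w O ≤ (m:ℝ) * (((p+1).factorial : ℝ) * maxL^(p+1)) := by
    rw [Phi]
    calc ∑ j, Psi (p+1) (mlist w O j)
        ≤ ∑ _j : Fin m, ((p+1).factorial : ℝ) * maxL^(p+1) :=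
          Finset.sum_le_sum (fun j _ => hb j)
      _ = (m:ℝ) * (((p+1).factorial : ℝ) * maxL^(p+1)) := by
          rw [Finset.sum_const, Finset.card_univ, Fintype.card_fin, nsmul_eq_mul]
  have hPhiO0 : 0 ≤ Phi p w O :=
    Finset.sum_nonneg fun j _ => Psi_nonneg _ _ (fun y hy => (mlist_mem_pos hw y hy).le)
  have hp1ne : ((p:ℝ)+1) ≠ 0 := by positivity
  have hfrpow : (((p+1).factorial : ℝ)) ^ ((1:ℝ)/(p+1)) ≤ ((p:ℝ)+1) := by
    have hfle : (((p+1).factorial : ℝ)) ≤ ((p:ℝ)+1) ^ (p+1 : ℕ) := by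
      have := Nat.factorial_le_pow (p+1)
      exact_mod_cast this
    calc (((p+1).factorial : ℝ)) ^ ((1:ℝ)/(p+1))
        ≤ (((p:ℝ)+1) ^ (p+1 : ℕ)) ^ ((1:ℝ)/(p+1)) :=
          Real.rpow_le_rpow hfactpos.le hfle (by positivity)
      _ = ((p:ℝ)+1) := by
          rw [← Real.rpow_natCast ((p:ℝ)+1) (p+1), ← Real.rpow_mul (by positivity)]
          push_cast
          rw [mul_one_div, div_self hp1ne, Real.rpow_one]
  have hmaxLrpow : (maxL ^ (p+1 : ℕ)) ^ ((1:ℝ)/(p+1)) = maxL := by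
    rw [← Real.rpow_natCast maxL (p+1), ← Real.rpow_mul hmaxL0]
    push_cast
    rw [mul_one_div, div_self hp1ne, Real.rpow_one]
  have step3 : Phi p w O ^ ((1:ℝ)/(p+1)) ≤ ((p:ℝ)+1) * (m:ℝ)^((1:ℝ)/(p+1)) * maxL := by
    calc Phi p w O ^ ((1:ℝ)/(p+1))
        ≤ ((m:ℝ) * (((p+1).factorial : ℝ) * maxL^(p+1))) ^ ((1:ℝ)/(p+1)) :=
          Real.rpow_le_rpow hPhiO0 hPhiO (by positivity)
      _ = (m:ℝ)^((1:ℝ)/(p+1)) * ((((p+1).factorial : ℝ))^((1:ℝ)/(p+1)) * (maxL^(p+1:ℕ))^((1:ℝ)/(p+1))) := by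
          rw [Real.mul_rpow (by positivity) (by positivity),
            Real.mul_rpow hfactpos.le (by positivity)]
      _ = (m:ℝ)^((1:ℝ)/(p+1)) * ((((p+1).factorial : ℝ))^((1:ℝ)/(p+1)) * maxL) := by
          rw [hmaxLrpow]
      _ ≤ (m:ℝ)^((1:ℝ)/(p+1)) * (((p:ℝ)+1) * maxL) := by
          apply mul_le_mul_of_nonneg_left _ (by positivity)
          exact mul_le_mul_of_nonneg_right hfrpow hmaxL0
      _ = ((p:ℝ)+1) * (m:ℝ)^((1:ℝ)/(p+1)) * maxL := by ring
  -- Step 4 : x ≤ maxL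
  have step4 : x ≤ maxL := by
    have h1 : x ≤ w i (O i) := hmin (O i)
    have h2 : w i (O i) ≤ load w O (O i) := by
      rw [load]
      exact Finset.single_le_sum (fun i' _ => (hw i' (O i)).le) (by simp)
    exact le_trans h1 (le_trans h2 (hload_le (O i)))
  -- Final assembly
  calc Ccost p w N i ≤ S + p * x := step1
    _ ≤ γ * Phi p w O ^ ((1:ℝ)/(p+1)) + p * x := by
        have := le_trans step2 hΦ
        linarith
    _ ≤ γ * (((p:ℝ)+1) * (m:ℝ)^((1:ℝ)/(p+1)) * maxL) + p * maxL := by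
        have h1 : γ * Phi p w O ^ ((1:ℝ)/(p+1)) ≤ γ * (((p:ℝ)+1) * (m:ℝ)^((1:ℝ)/(p+1)) * maxL) :=
          mul_le_mul_of_nonneg_left step3 hγ
        have h2 : (p:ℝ) * x ≤ (p:ℝ) * maxL :=
          mul_le_mul_of_nonneg_left step4 (by positivity)
        linarith
    _ = (γ * ((p:ℝ) + 1) * (m : ℝ) ^ ((1 : ℝ) / (p + 1)) + p) * maxL := by ring
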